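/- Under the rattleback parameter conditions, the partial derivatives of the energy H with respect to ω₁, ω₂ and γ₃, and of the geometric integral G with respect to γ₃, all vanish at every point of the curve Γ. Precisely, let h ∈ ℂ, K = m(b₁²+b₂²)+Σ₃₃, α² = 2h/K, β = −2mg(ρ₁−ρ₂)/K, fix p ∈ ℂ with p² ≠ α², and let (ω⁰,γ⁰) = ((0,0,p), ((p²−α²)/β)(1,i,0)) be the corresponding point of Γ. Let s(γ) be an analytic function on a neighborhood of γ⁰ with s(γ)² = b₁²γ₁² + b₂²γ₂² + b₃²γ₃² and s(γ⁰) = (ρ₁−ρ₂)(p²−α²)/β, and set R(γ) = −(b₁²γ₁, b₂²γ₂, b₃²γ₃)/s(γ), H(ω,γ) = (m/2)⟨ω×R(γ), ω×R(γ)⟩ + (1/2)⟨ω,Θω⟩ − mg⟨R(γ),γ⟩, G(γ) = ⟨γ,γ⟩. Then ∂H/∂ω₁, ∂H/∂ω₂, ∂H/∂γ₃ and ∂G/∂γ₃ all vanish at (ω⁰,γ⁰). -/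

import Mathlib

open Matrix

private lemma aux_fderiv_eq_zero {E : Type*} [NormedAddCommGroup E] [NormedSpace ℂ E]
    (f : E → ℂ) (x v : E)
    (h : deriv (fun t : ℂ => f (x + t • v)) 0 = 0) :
    fderiv ℂ f x v = 0 := by
  by_cases hf : DifferentiableAt ℂ f x
  · have hline : HasDerivAt (fun t : ℂ => x + t • v) v 0 := by
      simpa using ((hasDerivAt_id (0 : ℂ)).smul_const v).const_add x
    have hfd : HasFDerivAt f (fderiv ℂ f x) (x + (0 : ℂ) • v) := by
      simpa using hf.hasFDerivAt
    have hcomp : HasDerivAt (fun t : ℂ => f (x + t • v)) (fderiv ℂ f x v) 0 :=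
      hfd.comp_hasDerivAt (0 : ℂ) hline
    rw [← hcomp.deriv]; exact h
  · simp [fderiv_zero_of_not_differentiableAt hf]

private lemma aux_deriv_quad (A B : ℂ) : deriv (fun t : ℂ => A + B * t ^ 2) 0 = 0 := by
  have h : HasDerivAt (fun t : ℂ => A + B * t ^ 2) (B * (2 * (0:ℂ) ^ 1)) 0 := by
    simpa using ((hasDerivAt_pow 2 (0 : ℂ)).const_mul B).const_add A
  simpa using h.deriv

set_option maxHeartbeats 2000000 in
/-- At every point of the curve `Γ`, the partial derivatives of the energy
`H` with respect to `ω₁`, `ω₂` and `γ₃`, and of the geometric integral `G` with respect to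
`γ₃`, all vanish. -/
theorem rattleback_first_integrals_normal_derivatives_vanish
    (S11 S12 S22 S33 b1 b2 b3 m g ρ1 ρ2 ρ3 : ℝ)
    (hS11 : 0 < S11) (hS12 : 0 < S12) (hS22 : 0 < S22) (hS33 : 0 < S33)
    (hS : S33 < S11 + S22)
    (hρ12 : ρ2 < ρ1) (hρ2 : 0 < ρ2) (hρ3 : 0 < ρ3) (hm : 0 < m) (hg : 0 < g)
    (hb1 : b1 ^ 2 = ρ1 * (ρ1 - ρ2)) (hb2 : b2 ^ 2 = ρ2 * (ρ1 - ρ2))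
    (hb3 : b3 ^ 2 = ρ3 * (ρ1 - ρ2))
    (Θ : Matrix (Fin 3) (Fin 3) ℂ)
    (hΘ : Θ = !![(S11 : ℂ), (S12 : ℂ), 0; (S12 : ℂ), (S22 : ℂ), 0; 0, 0, (S33 : ℂ)])
    (h : ℂ) (K : ℝ) (hK : K = m * (b1 ^ 2 + b2 ^ 2) + S33)
    (α : ℂ) (hα : α ^ 2 = 2 * h / (K : ℂ))
    (β : ℝ) (hβ : β = -(2 * m * g * (ρ1 - ρ2)) / K)
    (p : ℂ) (hp : p ^ 2 ≠ α ^ 2)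
    (ω0 γ0 : Fin 3 → ℂ)
    (hω0 : ω0 = ![0, 0, p])
    (hγ0 : γ0 = ((p ^ 2 - α ^ 2) / (β : ℂ)) • ![1, Complex.I, 0])
    (s : (Fin 3 → ℂ) → ℂ)
    (hs_an : AnalyticAt ℂ s γ0)
    (hs_sq : ∀ᶠ γ in nhds γ0, s γ ^ 2
      = (b1 : ℂ) ^ 2 * (γ 0) ^ 2 + (b2 : ℂ) ^ 2 * (γ 1) ^ 2 + (b3 : ℂ) ^ 2 * (γ 2) ^ 2)
    (hs0 : s γ0 = ((ρ1 : ℂ) - ρ2) * (p ^ 2 - α ^ 2) / (β : ℂ))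
    (R : (Fin 3 → ℂ) → (Fin 3 → ℂ))
    (hR : ∀ γ, R γ = fun j => -(![(b1 : ℂ) ^ 2, (b2 : ℂ) ^ 2, (b3 : ℂ) ^ 2] j * γ j) / s γ)
    (H : (Fin 3 → ℂ) × (Fin 3 → ℂ) → ℂ)
    (hH : ∀ x : (Fin 3 → ℂ) × (Fin 3 → ℂ), H x
      = (m : ℂ) / 2 * (crossProduct x.1 (R x.2) ⬝ᵥ crossProduct x.1 (R x.2))
        + 1 / 2 * (x.1 ⬝ᵥ Θ.mulVec x.1) - (m : ℂ) * g * (R x.2 ⬝ᵥ x.2))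
    (G : (Fin 3 → ℂ) → ℂ) (hG : ∀ γ, G γ = γ ⬝ᵥ γ) :
    fderiv ℂ H (ω0, γ0) (Pi.single 0 1, 0) = 0 ∧
    fderiv ℂ H (ω0, γ0) (Pi.single 1 1, 0) = 0 ∧
    fderiv ℂ H (ω0, γ0) (0, Pi.single 2 1) = 0 ∧
    fderiv ℂ G γ0 (Pi.single 2 1) = 0 := by
  -- Preliminaries
  have hρR : (0:ℝ) < ρ1 - ρ2 := sub_pos.2 hρ12
  have hρ : (ρ1 : ℂ) - (ρ2 : ℂ) ≠ 0 := by
    have : (ρ1 : ℝ) - ρ2 ≠ 0 := ne_of_gt hρR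
    exact_mod_cast this
  have hKpos : 0 < K := by nlinarith [hb1, hb2]
  have hβ0 : β ≠ 0 := by
    rw [hβ]
    have hnum : -(2 * m * g * (ρ1 - ρ2)) < 0 := by
      nlinarith [mul_pos (mul_pos (mul_pos (by norm_num : (0:ℝ) < 2) hm) hg) hρR]
    exact div_ne_zero (ne_of_lt hnum) (ne_of_gt hKpos)
  have hβC : (β : ℂ) ≠ 0 := by exact_mod_cast hβ0
  set c : ℂ := (p ^ 2 - α ^ 2) / (β : ℂ) with hc_def
  have hc : c ≠ 0 := div_ne_zero (sub_ne_zero.2 hp) hβC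
  have hs0c : s γ0 = ((ρ1 : ℂ) - ρ2) * c := by rw [hs0, hc_def]; ring
  have hs0ne : s γ0 ≠ 0 := hs0c ▸ mul_ne_zero hρ hc
  have hb1C : (b1 : ℂ) ^ 2 = (ρ1 : ℂ) * ((ρ1 : ℂ) - ρ2) := by exact_mod_cast hb1
  have hb2C : (b2 : ℂ) ^ 2 = (ρ2 : ℂ) * ((ρ1 : ℂ) - ρ2) := by exact_mod_cast hb2
  have hb3C : (b3 : ℂ) ^ 2 = (ρ3 : ℂ) * ((ρ1 : ℂ) - ρ2) := by exact_mod_cast hb3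
  have hγ00 : γ0 0 = c := by simp [hγ0]
  have hγ01 : γ0 1 = c * Complex.I := by simp [hγ0, mul_comm]
  have hγ02 : γ0 2 = 0 := by simp [hγ0]
  have hR0 : R γ0 = ![-(ρ1 : ℂ), -((ρ2 : ℂ) * Complex.I), 0] := by
    rw [hR]
    funext j
    simp only [hs0c]
    fin_cases j <;>
      simp [hγ0, hb1C, hb2C, hb3C] <;>
      field_simp <;>
      ring
  have hγt : ∀ t : ℂ, γ0 + t • (Pi.single 2 1 : Fin 3 → ℂ) = ![c, c * Complex.I, t] := by
    intro t; funext j; fin_cases j <;> simp [hγ0, Pi.single_apply]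
  refine ⟨?_, ?_, ?_, ?_⟩
  -- ∂H/∂ω₁
  · apply aux_fderiv_eq_zero
    have hfun : (fun t : ℂ => H ((ω0, γ0) + t • ((Pi.single 0 1 : Fin 3 → ℂ), (0 : Fin 3 → ℂ)))) =
        fun t : ℂ => ((m:ℂ)/2 * (p^2*(ρ1:ℂ)^2 - p^2*(ρ2:ℂ)^2) + (S33:ℂ)*p^2/2
            + (m:ℂ)*(g:ℂ)*((ρ1:ℂ)-(ρ2:ℂ))*c)
          + ((S11:ℂ)/2 - (m:ℂ)/2*(ρ2:ℂ)^2) * t ^ 2 := by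
      funext t
      have hω_t : ω0 + t • (Pi.single 0 1 : Fin 3 → ℂ) = ![t, 0, p] := by
        funext j; fin_cases j <;> simp [hω0, Pi.single_apply]
      simp only [Prod.smul_mk, Prod.mk_add_mk, smul_zero, add_zero, hω_t]
      rw [hH]
      simp [hR0, hΘ, hγ00, hγ01, hγ02, cross_apply, dotProduct, Matrix.mulVec,
        Fin.sum_univ_three]
      ring_nf
      try simp only [Complex.I_sq]
      try ring
    rw [hfun]
    exact aux_deriv_quad _ _
  -- ∂H/∂ω₂
  · apply aux_fderiv_eq_zero
    have hfun : (fun t : ℂ => H ((ω0, γ0) + t • ((Pi.single 1 1 : Fin 3 → ℂ), (0 : Fin 3 → ℂ)))) =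
        fun t : ℂ => ((m:ℂ)/2 * (p^2*(ρ1:ℂ)^2 - p^2*(ρ2:ℂ)^2) + (S33:ℂ)*p^2/2
            + (m:ℂ)*(g:ℂ)*((ρ1:ℂ)-(ρ2:ℂ))*c)
          + ((S22:ℂ)/2 + (m:ℂ)/2*(ρ1:ℂ)^2) * t ^ 2 := by
      funext t
      have hω_t : ω0 + t • (Pi.single 1 1 : Fin 3 → ℂ) = ![0, t, p] := by
        funext j; fin_cases j <;> simp [hω0, Pi.single_apply]
      simp only [Prod.smul_mk, Prod.mk_add_mk, smul_zero, add_zero, hω_t]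
      rw [hH]
      simp [hR0, hΘ, hγ00, hγ01, hγ02, cross_apply, dotProduct, Matrix.mulVec,
        Fin.sum_univ_three]
      ring_nf
      try simp only [Complex.I_sq]
      try ring
    rw [hfun]
    exact aux_deriv_quad _ _
  -- ∂H/∂γ₃
  · apply aux_fderiv_eq_zero
    set f : ℂ → ℂ := fun t => s (γ0 + t • (Pi.single 2 1 : Fin 3 → ℂ)) with hf_def
    have hf00 : f 0 = s γ0 := by simp [hf_def]
    have hf0ne : f 0 ≠ 0 := hf00 ▸ hs0ne
    have hline : HasDerivAt (fun t : ℂ => γ0 + t • (Pi.single 2 1 : Fin 3 → ℂ))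
        (Pi.single 2 1 : Fin 3 → ℂ) 0 := by
      simpa using ((hasDerivAt_id (0 : ℂ)).smul_const (Pi.single 2 1 : Fin 3 → ℂ)).const_add γ0
    have hsfd : HasFDerivAt s (fderiv ℂ s γ0)
        (γ0 + (0:ℂ) • (Pi.single 2 1 : Fin 3 → ℂ)) := by
      simpa using hs_an.differentiableAt.hasFDerivAt
    have hf : HasDerivAt f (fderiv ℂ s γ0 (Pi.single 2 1)) 0 :=
      hsfd.comp_hasDerivAt 0 hline
    have hcont : Filter.Tendsto (fun t : ℂ => γ0 + t • (Pi.single 2 1 : Fin 3 → ℂ))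
        (nhds 0) (nhds γ0) := by
      simpa using hline.continuousAt.tendsto
    have hsq : ∀ᶠ t : ℂ in nhds 0, f t ^ 2 = (s γ0) ^ 2 + (b3:ℂ)^2 * t ^ 2 := by
      filter_upwards [hcont.eventually hs_sq] with t ht
      show s (γ0 + t • (Pi.single 2 1 : Fin 3 → ℂ)) ^ 2 = _
      rw [ht]
      simp [hγt t, hγ00, hγ01, hγ02, hs0c, hb1C, hb2C]
      ring_nf
      try simp only [Complex.I_sq]
      try ring
    have hgq : HasDerivAt (fun t : ℂ => (s γ0)^2 + (b3:ℂ)^2 * t^2)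
        ((b3:ℂ)^2 * (2*(0:ℂ)^1)) 0 := by
      simpa using ((hasDerivAt_pow 2 (0:ℂ)).const_mul ((b3:ℂ)^2)).const_add ((s γ0)^2)
    have hgq0 : HasDerivAt (fun t : ℂ => (s γ0)^2 + (b3:ℂ)^2 * t^2) 0 0 := by
      simpa using hgq
    have hfsq : HasDerivAt (fun t => f t ^ 2) 0 0 :=
      hgq0.congr_of_eventuallyEq hsq
    have huni : (2:ℂ) * f 0 ^ 1 * fderiv ℂ s γ0 (Pi.single 2 1) = 0 :=
      (hf.pow 2).unique hfsq
    have hd : fderiv ℂ s γ0 (Pi.single 2 1) = 0 := by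
      field_simp [hf0ne] at huni
      rcases mul_eq_zero.mp huni with h' | h'
      · exact absurd h' (by simp [hf0ne])
      · exact h'
    have hf0 : HasDerivAt f 0 0 := hd ▸ hf
    have hfun : (fun t : ℂ => H ((ω0, γ0) + t • ((0 : Fin 3 → ℂ), (Pi.single 2 1 : Fin 3 → ℂ)))) =
        fun t : ℂ => ((m:ℂ)/2*p^2*c^2*((b1:ℂ)^4-(b2:ℂ)^4)) / f t ^ 2
          + (m:ℂ)*(g:ℂ) * ((b1:ℂ)^2*c^2 - (b2:ℂ)^2*c^2 + (b3:ℂ)^2*t^2) / f t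
          + (S33:ℂ) * p ^ 2 / 2 := by
      funext t
      simp only [Prod.smul_mk, Prod.mk_add_mk, smul_zero, add_zero, hf_def]
      rw [hH, hR]
      simp [hω0, hγt t, hγ00, hγ01, hγ02, hΘ, cross_apply, dotProduct, Matrix.mulVec, Fin.sum_univ_three]
      ring_nf
      try simp only [Complex.I_sq]
      try ring
    rw [hfun]
    have hD : HasDerivAt (fun t : ℂ => ((m:ℂ)/2*p^2*c^2*((b1:ℂ)^4-(b2:ℂ)^4)) / f t ^ 2)
        ((0 * (f 0 ^ 2) - ((m:ℂ)/2*p^2*c^2*((b1:ℂ)^4-(b2:ℂ)^4)) * ((2:ℂ) * f 0 ^ 1 * 0))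
          / (f 0 ^ 2) ^ 2) 0 :=
      (hasDerivAt_const 0 _).div (hf0.pow 2) (pow_ne_zero 2 hf0ne)
    have hIn : HasDerivAt
        (fun t : ℂ => (b1:ℂ)^2*c^2 - (b2:ℂ)^2*c^2 + (b3:ℂ)^2*t^2)
        ((b3:ℂ)^2 * (2*(0:ℂ)^1)) 0 := by
      simpa using ((hasDerivAt_pow 2 (0:ℂ)).const_mul ((b3:ℂ)^2)).const_add
        ((b1:ℂ)^2*c^2 - (b2:ℂ)^2*c^2)
    have hNum : HasDerivAt
        (fun t : ℂ => (m:ℂ)*(g:ℂ) * ((b1:ℂ)^2*c^2 - (b2:ℂ)^2*c^2 + (b3:ℂ)^2*t^2))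
        ((m:ℂ)*(g:ℂ) * ((b3:ℂ)^2 * (2*(0:ℂ)^1))) 0 := hIn.const_mul _
    have hQ := hNum.div hf0 hf0ne
    have htotal := (hD.add hQ).add_const ((S33:ℂ) * p ^ 2 / 2)
    refine htotal.deriv.trans ?_
    norm_num
  -- ∂G/∂γ₃
  · apply aux_fderiv_eq_zero
    have hfun : (fun t : ℂ => G (γ0 + t • (Pi.single 2 1 : Fin 3 → ℂ))) =
        fun t : ℂ => (0 : ℂ) + 1 * t ^ 2 := by
      funext t
      rw [hG, hγt t]
      simp [dotProduct, Fin.sum_univ_three]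
      ring_nf
      try simp only [Complex.I_sq]
      try ring
    rw [hfun]
    exact aux_deriv_quad _ _
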